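/- Let d ≥ 1 be an integer and g:ℝ×ℝ^d→ℝ. Let u, λ, f, m, k ≥ 0, α ∈ (0,1), and let ρ:ℝ₊→ℝ₊ be nondecreasing with ρ(x) ≤ k(x+1) for all x ≥ 0. Assume: (g(y₁,z) − g(y₂,z))·sgn(y₁−y₂) ≤ u ρ(|y₁−y₂|) for all y₁, y₂ ∈ ℝ and z ∈ ℝ^d; |g(y,z) − g(y,0)| ≤ λ (f + |y| + |z|)^α for all (y,z); and |g(0,0)| ≤ m. Then for all (y,z) ∈ ℝ×ℝ^d: g(y,z)·sgn(y) ≤ (ku + λ f^α + m) + ku|y| + λ|z|^α. (Inequality (64) in the proof of Theorem 6.5.) -/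

import Mathlib

open Set

lemma rpow_add_le_add_rpow_real {a b p : ℝ} (ha : 0 ≤ a) (hb : 0 ≤ b)
    (hp : 0 ≤ p) (hp1 : p ≤ 1) : (a + b) ^ p ≤ a ^ p + b ^ p := by
  have := NNReal.rpow_add_le_add_rpow (a.toNNReal) (b.toNNReal) hp hp1
  have h := NNReal.coe_le_coe.mpr this
  push_cast at h
  rwa [Real.coe_toNNReal _ ha, Real.coe_toNNReal _ hb] at h

/-- **Inequality (64) in the proof of Theorem 6.5.** If `g : ℝ × ℝ^d → ℝ` satisfies a
one-sided Osgood-type condition in `y` with modulus `ρ` (nondecreasing, `ρ(x) ≤ k(x+1)`),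
`|g(y,z) - g(y,0)| ≤ λ (f + |y| + |z|)^α` with `α ∈ (0,1)`, and `|g(0,0)| ≤ m`, then
`g(y,z)·sgn(y) ≤ (ku + λ f^α + m) + ku|y| + λ|z|^α` for all `(y,z)`. -/
theorem inequality_64
    (d : ℕ) (hd : 1 ≤ d)
    (g : ℝ → EuclideanSpace ℝ (Fin d) → ℝ)
    (u lam f m k α : ℝ)
    (hu : 0 ≤ u) (hlam : 0 ≤ lam) (hf : 0 ≤ f) (hm : 0 ≤ m) (hk : 0 ≤ k)
    (hα : α ∈ Ioo (0 : ℝ) 1)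
    (ρ : ℝ → ℝ)
    (hρ_nonneg : ∀ x, 0 ≤ x → 0 ≤ ρ x)
    (hρ_mono : MonotoneOn ρ (Ici 0))
    (hρ_growth : ∀ x, 0 ≤ x → ρ x ≤ k * (x + 1))
    (h2A1 : ∀ y₁ y₂ z, (g y₁ z - g y₂ z) * Real.sign (y₁ - y₂) ≤ u * ρ |y₁ - y₂|)
    (h2A5 : ∀ y z, |g y z - g y 0| ≤ lam * (f + |y| + ‖z‖) ^ α)
    (hg00 : |g 0 0| ≤ m) :
    ∀ y z, g y z * Real.sign y ≤ (k * u + lam * f ^ α + m) + k * u * |y| + lam * ‖z‖ ^ α := by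
  intro y z
  obtain ⟨hα0, hα1⟩ := hα
  -- Step 1: (g y z - g 0 z) * sgn y ≤ u * ρ |y| ≤ u * k * (|y| + 1)
  have h1 : (g y z - g 0 z) * Real.sign y ≤ u * (k * (|y| + 1)) := by
    have := h2A1 y 0 z
    rw [sub_zero] at this
    exact this.trans (mul_le_mul_of_nonneg_left (hρ_growth _ (abs_nonneg y)) hu)
  -- Step 2: g 0 z * sgn y ≤ |g 0 z|
  have habs_sgn : |Real.sign y| ≤ 1 := by
    rcases lt_trichotomy y 0 with h | h | h
    · rw [Real.sign_of_neg h]; simp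
    · simp [h]
    · rw [Real.sign_of_pos h]; simp
  have h2 : g 0 z * Real.sign y ≤ |g 0 z| := by
    calc g 0 z * Real.sign y ≤ |g 0 z * Real.sign y| := le_abs_self _
      _ = |g 0 z| * |Real.sign y| := abs_mul _ _
      _ ≤ |g 0 z| * 1 := mul_le_mul_of_nonneg_left habs_sgn (abs_nonneg _)
      _ = |g 0 z| := mul_one _
  -- Step 3: |g 0 z| ≤ lam * f^α + lam * ‖z‖^α + m
  have h3 : |g 0 z| ≤ lam * f ^ α + lam * ‖z‖ ^ α + m := by
    have ha := h2A5 0 z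
    simp only [abs_zero, add_zero] at ha
    have hsub : (f + ‖z‖) ^ α ≤ f ^ α + ‖z‖ ^ α :=
      rpow_add_le_add_rpow_real hf (norm_nonneg z) hα0.le hα1.le
    calc |g 0 z| ≤ |g 0 z - g 0 0| + |g 0 0| := by
          have := abs_sub_abs_le_abs_sub (g 0 z) (g 0 0)
          linarith [abs_sub_abs_le_abs_sub (g 0 z) (g 0 0)]
      _ ≤ lam * (f + ‖z‖) ^ α + m := add_le_add ha hg00
      _ ≤ lam * (f ^ α + ‖z‖ ^ α) + m :=
          add_le_add_left (mul_le_mul_of_nonneg_left hsub hlam) m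
      _ = lam * f ^ α + lam * ‖z‖ ^ α + m := by ring
  have : g y z * Real.sign y = (g y z - g 0 z) * Real.sign y + g 0 z * Real.sign y := by ring
  rw [this]
  have := add_le_add h1 (h2.trans h3)
  nlinarith [this]
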